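/- Define δ₁(u,c,p,m) := 2c(1 - c^{2m-2})u + 2pc(1 - c^{2m-1}) + c²(1 - c^{2m-3}). Then δ₁(u,c,p,m) ≥ 0 for all u ≥ 0, c ∈ (0,1), m ≥ 1, and p ∈ [p_*(m), 1), where p_*(m) := (2m+1 - √(4(m-1)(m+2)+1))/(4(2m-1)). -/

import Mathlib

open Real

lemma amgm_one_le (a x : ℝ) (ha1 : 1 ≤ a) (ha2 : a ≤ 2) (hx0 : 0 < x) :
    1 ≤ (a - 1) * x ^ (a - 2) + (2 - a) * x ^ (a - 1) := by
  have h := Real.geom_mean_le_arith_mean2_weighted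
    (by linarith : (0:ℝ) ≤ a - 1) (by linarith : (0:ℝ) ≤ 2 - a)
    (Real.rpow_nonneg hx0.le (a - 2)) (Real.rpow_nonneg hx0.le (a - 1)) (by ring)
  calc (1:ℝ) = (x ^ (a - 2)) ^ (a - 1) * (x ^ (a - 1)) ^ (2 - a) := by
        rw [← Real.rpow_mul hx0.le, ← Real.rpow_mul hx0.le, ← Real.rpow_add hx0,
          show (a - 2) * (a - 1) + (a - 1) * (2 - a) = 0 by ring, Real.rpow_zero]
    _ ≤ _ := h

lemma key_ineq (a : ℝ) (ha1 : 1 ≤ a) (ha2 : a ≤ 2) {c : ℝ} (hc0 : 0 < c) (hc1 : c ≤ 1) :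
    a * c ^ (a - 1) + (2 - a) * c ^ a ≤ (2 - a) + a * c := by
  set f : ℝ → ℝ := fun x => (2 - a) + a * x - a * x ^ (a - 1) - (2 - a) * x ^ a with hf
  have hder : ∀ x : ℝ, 0 < x →
      HasDerivAt f (a - a * ((a - 1) * x ^ (a - 1 - 1)) - (2 - a) * (a * x ^ (a - 1))) x := by
    intro x hx
    have h1 : HasDerivAt (fun x : ℝ => x ^ (a - 1)) ((a - 1) * x ^ (a - 1 - 1)) x :=
      Real.hasDerivAt_rpow_const (Or.inl hx.ne')
    have h2 : HasDerivAt (fun x : ℝ => x ^ a) (a * x ^ (a - 1)) x :=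
      Real.hasDerivAt_rpow_const (Or.inl hx.ne')
    have := (((hasDerivAt_const x (2 - a)).add ((hasDerivAt_id x).const_mul a)).sub
      (h1.const_mul a)).sub (h2.const_mul (2 - a))
    refine this.congr_deriv ?_
    ring
  have hanti : AntitoneOn f (Set.Icc c 1) := by
    apply antitoneOn_of_deriv_nonpos (convex_Icc c 1)
    · intro x hx
      exact ((hder x (lt_of_lt_of_le hc0 hx.1)).continuousAt).continuousWithinAt
    · intro x hx
      rw [interior_Icc] at hx
      exact ((hder x (lt_trans hc0 hx.1)).differentiableAt).differentiableWithinAt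
    · intro x hx
      rw [interior_Icc] at hx
      have hx0 : 0 < x := lt_trans hc0 hx.1
      rw [(hder x hx0).deriv, show a - 1 - 1 = a - 2 by ring]
      have := amgm_one_le a x ha1 ha2 hx0
      nlinarith [this, ha1]
  have h1mem : (1:ℝ) ∈ Set.Icc c 1 := ⟨hc1, le_refl 1⟩
  have hcmem : c ∈ Set.Icc c 1 := ⟨le_refl c, hc1⟩
  have := hanti hcmem h1mem hc1
  have hf1 : f 1 = 0 := by
    simp only [hf, Real.one_rpow]
    ring
  have hfc : f c = (2 - a) + a * c - a * c ^ (a - 1) - (2 - a) * c ^ a := rfl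
  rw [hf1] at this
  linarith [this, hfc ▸ this]

/-- `δ₁(u,c,p,m) ≥ 0` for `u ≥ 0`, `c ∈ (0,1)`, `m ≥ 1`, `p ∈ [p_*(m), 1)`. -/
theorem delta1_nonneg (u c p m : ℝ) (hu : 0 ≤ u) (hc : c ∈ Set.Ioo (0 : ℝ) 1)
    (hm : 1 ≤ m)
    (hp : (2 * m + 1 - Real.sqrt (4 * (m - 1) * (m + 2) + 1)) / (4 * (2 * m - 1)) ≤ p)
    (hp1 : p < 1) :
    0 ≤ 2 * c * (1 - c ^ (2 * m - 2)) * u + 2 * p * c * (1 - c ^ (2 * m - 1))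
        + c ^ 2 * (1 - c ^ (2 * m - 3)) := by
  obtain ⟨hc0, hc1⟩ := hc
  set X : ℝ := 4 * (m - 1) * (m + 2) + 1 with hX
  have hX0 : 0 ≤ X := by nlinarith
  have hden : (0:ℝ) < 4 * (2 * m - 1) := by linarith
  -- p is positive
  have hsqlt : Real.sqrt X < 2 * m + 1 := by
    rw [Real.sqrt_lt' (by linarith)]
    nlinarith
  have hp0 : 0 < p := by
    have : 0 < (2 * m + 1 - Real.sqrt X) / (4 * (2 * m - 1)) :=
      div_pos (by linarith) hden
    linarith
  -- basic rpow facts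
  have hA1 : c ^ (2 * m - 2) ≤ 1 := Real.rpow_le_one hc0.le hc1.le (by linarith)
  have hB1 : c ^ (2 * m - 1) ≤ 1 := Real.rpow_le_one hc0.le hc1.le (by linarith)
  have hApos : 0 < c ^ (2 * m - 2) := Real.rpow_pos_of_pos hc0 _
  have hBpos : 0 < c ^ (2 * m - 1) := Real.rpow_pos_of_pos hc0 _
  have hT1 : 0 ≤ 2 * c * (1 - c ^ (2 * m - 2)) * u := by
    apply mul_nonneg (mul_nonneg (by linarith) (by linarith)) hu
  by_cases hm32 : (3:ℝ)/2 ≤ m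
  · -- all three terms nonneg
    have hC1 : c ^ (2 * m - 3) ≤ 1 := Real.rpow_le_one hc0.le hc1.le (by linarith)
    have hT2 : 0 ≤ 2 * p * c * (1 - c ^ (2 * m - 1)) := by
      apply mul_nonneg (mul_nonneg (by linarith) hc0.le) (by linarith)
    have hT3 : 0 ≤ c ^ 2 * (1 - c ^ (2 * m - 3)) := by
      apply mul_nonneg (sq_nonneg c) (by linarith)
    linarith
  · push_neg at hm32
    -- a = 2m-1 ∈ [1,2)
    have hkey := key_ineq (2 * m - 1) (by linarith) (by linarith) hc0 hc1.le
    rw [show 2 * m - 1 - 1 = 2 * m - 2 by ring] at hkey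
    -- hkey : (2m-1) * c^(2m-2) + (2-(2m-1)) * c^(2m-1) ≤ (2-(2m-1)) + (2m-1)*c
    -- 2p(2m-1) ≥ 3-2m
    have hsqle : Real.sqrt X ≤ 6 * m - 5 := by
      have h1 : X ≤ (6 * m - 5) ^ 2 := by nlinarith [sq_nonneg (m - 1)]
      calc Real.sqrt X ≤ Real.sqrt ((6 * m - 5) ^ 2) := Real.sqrt_le_sqrt h1
        _ = |6 * m - 5| := Real.sqrt_sq_eq_abs _
        _ = 6 * m - 5 := abs_of_nonneg (by linarith)
    have hpnum : 2 * m + 1 - Real.sqrt X ≤ p * (4 * (2 * m - 1)) :=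
      (div_le_iff₀ hden).mp hp
    have hq : 3 - 2 * m ≤ 2 * p * (2 * m - 1) := by linarith
    -- multiplicative identities
    have hBA : c * c ^ (2 * m - 2) = c ^ (2 * m - 1) := by
      rw [show 2 * m - 1 = 1 + (2 * m - 2) by ring, Real.rpow_add hc0, Real.rpow_one]
    have hc2 : c ^ 2 * c ^ (2 * m - 3) = c ^ (2 * m - 1) := by
      rw [show (c:ℝ) ^ 2 = c ^ ((2:ℝ)) by rw [← Real.rpow_natCast c 2]; norm_num]
      rw [← Real.rpow_add hc0, show (2:ℝ) + (2 * m - 3) = 2 * m - 1 by ring]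
    have hc2' : (c:ℝ) ^ 2 = c * c := sq c
    -- e1 : c * (key slack) ≥ 0
    have e1 : 0 ≤ c * ((2 - (2 * m - 1)) + (2 * m - 1) * c
        - (2 * m - 1) * c ^ (2 * m - 2) - (2 - (2 * m - 1)) * c ^ (2 * m - 1)) :=
      mul_nonneg hc0.le (by linarith)
    have e2 : 0 ≤ (2 * p * (2 * m - 1) - (3 - 2 * m)) * (c * (1 - c ^ (2 * m - 1))) :=
      mul_nonneg (by linarith) (mul_nonneg hc0.le (by linarith))
    have e3 : 0 ≤ (2 * m - 1) * (2 * p * c * (1 - c ^ (2 * m - 1)) + (c * c - c ^ (2 * m - 1))) := by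
      nlinarith [e1, e2, hBA]
    have e4 : 0 ≤ 2 * p * c * (1 - c ^ (2 * m - 1)) + (c * c - c ^ (2 * m - 1)) :=
      nonneg_of_mul_nonneg_right e3 (by linarith)
    have hgoal : c ^ 2 * (1 - c ^ (2 * m - 3)) = c * c - c ^ (2 * m - 1) := by
      rw [mul_sub, hc2, hc2', mul_one]
    rw [hgoal]
    linarith
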